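/- Let 𝔤 be a finite-dimensional simple real Lie algebra. Then there do not exist ℝ-linear maps I, J : 𝔤 → 𝔤 with I ∘ I = −id, J ∘ J = −id and I ∘ J = −J ∘ I such that both I and J commute with every adjoint map, i.e. I⁅x, y⁆ = ⁅x, I y⁆ and J⁅x, y⁆ = ⁅x, J y⁆ for all x, y ∈ 𝔤. In other words, the adjoint representation of a simple real Lie algebra is never of quaternionic type. -/
import Mathlib

/-- The adjoint representation of a finite-dimensional simple
real Lie algebra is never of quaternionic type: there are no anticommuting
equivariant complex structures `I, J` on `𝔤`. -/
theorem adjoint_rep_not_quaternionic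
    (𝔤 : Type*) [LieRing 𝔤] [LieAlgebra ℝ 𝔤]
    [FiniteDimensional ℝ 𝔤] [LieAlgebra.IsSimple ℝ 𝔤] :
    ¬ ∃ (I J : 𝔤 →ₗ[ℝ] 𝔤),
        I ∘ₗ I = -LinearMap.id ∧
        J ∘ₗ J = -LinearMap.id ∧
        I ∘ₗ J = -(J ∘ₗ I) ∧
        (∀ x y : 𝔤, I ⁅x, y⁆ = ⁅x, I y⁆) ∧
        (∀ x y : 𝔤, J ⁅x, y⁆ = ⁅x, J y⁆) := by
  rintro ⟨I, J, hI2, hJ2, hIJ, hIeq, hJeq⟩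
  -- left equivariance
  have hIl : ∀ x y : 𝔤, I ⁅x, y⁆ = ⁅I x, y⁆ := by
    intro x y
    have : I ⁅x, y⁆ = - I ⁅y, x⁆ := by rw [← lie_skew x y, map_neg]
    rw [this, hIeq, ← lie_skew, neg_neg]
  have hJl : ∀ x y : 𝔤, J ⁅x, y⁆ = ⁅J x, y⁆ := by
    intro x y
    have : J ⁅x, y⁆ = - J ⁅y, x⁆ := by rw [← lie_skew x y, map_neg]
    rw [this, hJeq, ← lie_skew, neg_neg]
  -- I J = J I on brackets
  have hcomm : ∀ x y : 𝔤, I (J ⁅x, y⁆) = J (I ⁅x, y⁆) := by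
    intro x y
    rw [hJl x y, hIeq (J x) y, hIeq x y, hJl x (I y)]
  -- the commutator ideal is ⊤ since 𝔤 is simple and non-abelian
  have hderived : (⁅(⊤ : LieIdeal ℝ 𝔤), (⊤ : LieIdeal ℝ 𝔤)⁆ : LieIdeal ℝ 𝔤) = ⊤ := by
    rcases LieAlgebra.IsSimple.eq_bot_or_eq_top (⁅(⊤ : LieIdeal ℝ 𝔤), (⊤ : LieIdeal ℝ 𝔤)⁆) with h | h
    · exfalso
      apply LieAlgebra.IsSimple.non_abelian (R := ℝ) (L := 𝔤)
      constructor
      intro a b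
      have hab : ⁅a, b⁆ ∈ (⁅(⊤ : LieIdeal ℝ 𝔤), (⊤ : LieIdeal ℝ 𝔤)⁆ : LieIdeal ℝ 𝔤) :=
        LieSubmodule.lie_mem_lie (LieSubmodule.mem_top a) (LieSubmodule.mem_top b)
      rw [h] at hab
      simpa using hab
    · exact h
  -- hence I J = J I everywhere
  have hIJJI : ∀ z : 𝔤, I (J z) = J (I z) := by
    intro z
    have hz : z ∈ (⁅(⊤ : LieIdeal ℝ 𝔤), (⊤ : LieIdeal ℝ 𝔤)⁆ : LieIdeal ℝ 𝔤) := by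
      rw [hderived]; exact LieSubmodule.mem_top z
    rw [← LieSubmodule.mem_toSubmodule, LieSubmodule.lieIdeal_oper_eq_linear_span'] at hz
    have : z ∈ LinearMap.ker (I ∘ₗ J - J ∘ₗ I) := by
      refine Submodule.span_le.mpr ?_ hz
      rintro m ⟨x, -, n, -, rfl⟩
      simp only [SetLike.mem_coe, LinearMap.mem_ker, LinearMap.sub_apply, LinearMap.comp_apply]
      rw [hcomm x n, sub_self]
    simpa [sub_eq_zero] using this
  -- anticommutation forces I J = 0
  have hzero : ∀ z : 𝔤, I (J z) = 0 := by
    intro z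
    have h1 : I (J z) = - J (I z) := by
      simpa using LinearMap.congr_fun hIJ z
    rw [hIJJI z] at h1 ⊢
    have h2 : (2 : ℝ) • J (I z) = 0 := by
      rw [two_smul]
      nth_rewrite 1 [h1]
      exact neg_add_cancel _
    rcases smul_eq_zero.mp h2 with h | h
    · exact absurd h two_ne_zero
    · exact h
  -- then J = 0, then id = 0, contradiction with non-abelian (hence nontrivial)
  have hJ0 : ∀ z : 𝔤, J z = 0 := by
    intro z
    have : I (I (J z)) = - J z := by
      simpa using LinearMap.congr_fun hI2 (J z)
    rw [hzero z, map_zero] at this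
    exact (neg_eq_zero.mp this.symm)
  have hall : ∀ z : 𝔤, z = 0 := by
    intro z
    have : J (J z) = - z := by
      simpa using LinearMap.congr_fun hJ2 z
    rw [hJ0 z, map_zero] at this
    exact (neg_eq_zero.mp this.symm)
  apply LieAlgebra.IsSimple.non_abelian (R := ℝ) (L := 𝔤)
  exact ⟨fun a b => by rw [hall a, zero_lie]⟩
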